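/- Let S be a nonnegative n×n real matrix. Then there exists a Borel measure μ on 𝒞 × 𝒞 such that C(μ,k) = C(S,k) for every positive integer k. -/

import Mathlib

open MeasureTheory Matrix
open scoped Pointwise

noncomputable section

/-- The Cantor set `{0,1}^ℕ`. -/
abbrev Cantor : Type := ℕ → Bool

/-- Cylinder set of a binary string given as a function `Fin n → Bool`. -/
def cylF {n : ℕ} (x : Fin n → Bool) : Set Cantor := {ω | ∀ i : Fin n, ω i = x i}

/-- Cylinder set of a binary string given as a list. -/
def cyl (x : List Bool) : Set Cantor := {ω | ∀ i : Fin x.length, ω i = x.get i}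

/-- `ν` is the fair coin-flipping (uniform product) measure on the Cantor set:
the unique Borel probability measure giving every cylinder of depth `n` mass `2⁻ⁿ`. -/
def IsCoinMeasure (ν : Measure Cantor) : Prop :=
  IsProbabilityMeasure ν ∧ ∀ (n : ℕ) (x : Fin n → Bool), ν (cylF x) = (1 / 2 : ENNReal) ^ n

/-- `K(k,n)`: nonnegative `k × I` matrices with all row sums `|I|/k` and all column sums `1`. -/
def Kset (k : ℕ) (I : Type) [Fintype I] : Set (Matrix (Fin k) I ℝ) :=
  {M | (∀ i j, 0 ≤ M i j) ∧ (∀ i, ∑ j, M i j = (Fintype.card I : ℝ) / k) ∧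
       (∀ j, ∑ i, M i j = 1)}

/-- The `k`-shape `C(S,k) = {M S Mᵀ : M ∈ K(k,n)}` of a square matrix `S`. -/
def matShape {I : Type} [Fintype I] (S : Matrix I I ℝ) (k : ℕ) :
    Set (Matrix (Fin k) (Fin k) ℝ) :=
  (fun M => M * S * Mᵀ) '' Kset k I

/-- `γ(S)`: the sum of all entries of `S`. -/
def gamma {I : Type} [Fintype I] (S : Matrix I I ℝ) : ℝ := ∑ i, ∑ j, S i j

/-- The entrywise ℓ¹ norm of a matrix. -/
def l1 {k : ℕ} (A : Matrix (Fin k) (Fin k) ℝ) : ℝ := ∑ i, ∑ j, |A i j|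

/-- The Hausdorff distance (w.r.t. the entrywise ℓ¹ norm) between `A` and `B` is at most `ε`. -/
def hdistLE {k : ℕ} (A B : Set (Matrix (Fin k) (Fin k) ℝ)) (ε : ℝ) : Prop :=
  (∀ X ∈ A, ∃ Y ∈ B, l1 (X - Y) ≤ ε) ∧ (∀ Y ∈ B, ∃ X ∈ A, l1 (X - Y) ≤ ε)

/-- Convergence of a sequence of shapes to `L` in the ℓ¹-Hausdorff metric. -/
def ShapeTendsto {k : ℕ} (C : ℕ → Set (Matrix (Fin k) (Fin k) ℝ))
    (L : Set (Matrix (Fin k) (Fin k) ℝ)) : Prop :=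
  ∀ ε : ℝ, 0 < ε → ∃ N : ℕ, ∀ n ≥ N, hdistLE (C n) L ε

/-- `C₀(μ,k)`: matrices `M` with `M i j = ∫ fᵢ(x) fⱼ(y) dμ` for a measurable partition of unity
`f₁,…,f_k` with `∫ fᵢ dν = 1/k`. -/
def mShape0 {α : Type} [MeasurableSpace α] (ν : Measure α) (μ : Measure (α × α)) (k : ℕ) :
    Set (Matrix (Fin k) (Fin k) ℝ) :=
  {M | ∃ f : Fin k → α → ℝ,
    (∀ i, Measurable (f i)) ∧ (∀ i x, 0 ≤ f i x) ∧ (∀ x, ∑ i, f i x = 1) ∧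
    (∀ i, ∫ x, f i x ∂ν = 1 / k) ∧
    (∀ i j, M i j = ∫ p, f i p.1 * f j p.2 ∂μ)}

/-- `C(μ,k)`: the topological closure of `C₀(μ,k)`. -/
def mShape {α : Type} [MeasurableSpace α] (ν : Measure α) (μ : Measure (α × α)) (k : ℕ) :
    Set (Matrix (Fin k) (Fin k) ℝ) := closure (mShape0 ν μ k)

/-- `C_c(μ,k)`: as `C₀(μ,k)` but with continuous witness functions. -/
def mShapeC (ν : Measure Cantor) (μ : Measure (Cantor × Cantor)) (k : ℕ) :
    Set (Matrix (Fin k) (Fin k) ℝ) :=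
  {M | ∃ f : Fin k → Cantor → ℝ,
    (∀ i, Continuous (f i)) ∧ (∀ i x, 0 ≤ f i x) ∧ (∀ x, ∑ i, f i x = 1) ∧
    (∀ i, ∫ x, f i x ∂ν = 1 / k) ∧
    (∀ i j, M i j = ∫ p, f i p.1 * f j p.2 ∂μ)}

open Classical in
/-- The real adjacency matrix of a simple graph. -/
def adjMat {V : Type} [Fintype V] (G : SimpleGraph V) : Matrix V V ℝ :=
  fun a b => if G.Adj a b then 1 else 0

/-- `C₀(G,k) = ‖A_G‖₁⁻¹ ⬝ C(A_G,k)` for a finite graph `G`. -/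
def graphShape {V : Type} [Fintype V] (G : SimpleGraph V) (k : ℕ) :
    Set (Matrix (Fin k) (Fin k) ℝ) :=
  (gamma (adjMat G))⁻¹ • matShape (adjMat G) k

/-- `K̂(k,m)`: characteristic matrices of balanced partitions of `{1,…,m}` into `k` classes. -/
def Khat (k m : ℕ) : Set (Matrix (Fin k) (Fin m) ℝ) :=
  {M | (∀ i j, M i j = 0 ∨ M i j = 1) ∧ (∀ j, ∑ i, M i j = 1) ∧
       (∀ i, ∑ j, M i j = (⌈(m : ℝ) / k⌉₊ : ℝ) ∨ ∑ j, M i j = (⌊(m : ℝ) / k⌋₊ : ℝ))}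

/-- `C̃₀(μ,α)`: matrices coming from a measurable partition of unity with `∫ fᵢ dν = αᵢ`. -/
def tShape0 {α : Type} [MeasurableSpace α] (ν : Measure α) (μ : Measure (α × α)) {m : ℕ}
    (a : Fin m → ℝ) : Set (Matrix (Fin m) (Fin m) ℝ) :=
  {M | ∃ f : Fin m → α → ℝ,
    (∀ i, Measurable (f i)) ∧ (∀ i x, 0 ≤ f i x) ∧ (∀ x, ∑ i, f i x = 1) ∧
    (∀ i, ∫ x, f i x ∂ν = a i) ∧
    (∀ i j, M i j = ∫ p, f i p.1 * f j p.2 ∂μ)}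

/-- `C̃(μ,α)`: the topological closure of `C̃₀(μ,α)`. -/
def tShape {α : Type} [MeasurableSpace α] (ν : Measure α) (μ : Measure (α × α)) {m : ℕ}
    (a : Fin m → ℝ) : Set (Matrix (Fin m) (Fin m) ℝ) := closure (tShape0 ν μ a)

/-- The Hausdorff distance w.r.t. the entrywise ℓ∞ norm between `A` and `B` is at most `ε`. -/
def hdistInfLE {m : ℕ} (A B : Set (Matrix (Fin m) (Fin m) ℝ)) (ε : ℝ) : Prop :=
  (∀ X ∈ A, ∃ Y ∈ B, ∀ i j, |X i j - Y i j| ≤ ε) ∧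
  (∀ Y ∈ B, ∃ X ∈ A, ∀ i j, |X i j - Y i j| ≤ ε)

open scoped NNReal ENNReal

open Classical in
def gs (t : ℝ) : ℕ → ℝ
  | 0 => 0
  | m+1 => gs t m + if gs t m + (2⁻¹:ℝ)^(m+1) ≤ t then (2⁻¹:ℝ)^(m+1) else 0

open Classical in
def bb (t : ℝ) (m : ℕ) : Bool := decide (gs t m + (2⁻¹:ℝ)^(m+1) ≤ t)

open Classical in
lemma gs_succ (t : ℝ) (m : ℕ) :
    gs t (m+1) = gs t m + if bb t m then (2⁻¹:ℝ)^(m+1) else 0 := by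
  simp only [gs, bb]
  by_cases h : gs t m + (2⁻¹:ℝ)^(m+1) ≤ t
  · simp [h]
  · simp [h]

lemma bb_true_iff {t : ℝ} {m : ℕ} : bb t m = true ↔ gs t m + (2⁻¹:ℝ)^(m+1) ≤ t := by
  simp [bb]

lemma gs_invariant {t : ℝ} (h0 : 0 ≤ t) (h1 : t ≤ 1) (m : ℕ) :
    gs t m ≤ t ∧ t ≤ gs t m + (2⁻¹:ℝ)^m := by
  induction m with
  | zero => simpa [gs] using ⟨h0, h1⟩
  | succ m ih =>
    rw [gs_succ]
    by_cases h : bb t m = true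
    · have h2 := bb_true_iff.mp h
      simp only [h, if_true]
      constructor
      · linarith
      · have : (2⁻¹:ℝ)^m = (2⁻¹:ℝ)^(m+1) + (2⁻¹:ℝ)^(m+1) := by ring
        nlinarith [ih.2]
    · have hlt : ¬ (gs t m + (2⁻¹:ℝ)^(m+1) ≤ t) := fun hc => h (bb_true_iff.mpr hc)
      push_neg at hlt
      simp only [Bool.not_eq_true] at h
      simp only [h, Bool.false_eq_true, if_false, add_zero]
      exact ⟨ih.1, by linarith⟩

lemma gs_eq_sum (t : ℝ) (m : ℕ) :
    gs t m = ∑ i ∈ Finset.range m, (if bb t i then (2⁻¹:ℝ)^(i+1) else 0) := by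
  induction m with
  | zero => simp [gs]
  | succ m ih => rw [gs_succ, Finset.sum_range_succ, ih]

lemma summable_bbterm (t : ℝ) :
    Summable (fun m => if bb t m then (2⁻¹:ℝ)^(m+1) else 0) := by
  have hnn : ∀ m, (0:ℝ) ≤ (if bb t m then (2⁻¹:ℝ)^(m+1) else 0) := by
    intro m; by_cases h : bb t m = true <;> simp [h] <;> positivity
  have hle : ∀ m, (if bb t m then (2⁻¹:ℝ)^(m+1) else 0) ≤ (2⁻¹:ℝ)^m := by
    intro m
    have h1 : (2⁻¹:ℝ)^(m+1) ≤ (2⁻¹:ℝ)^m :=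
      pow_le_pow_of_le_one (by norm_num) (by norm_num) (Nat.le_succ m)
    by_cases h : bb t m = true
    · simpa [h] using h1
    · simp [h]
  exact Summable.of_nonneg_of_le hnn hle
    (summable_geometric_of_lt_one (by norm_num) (by norm_num))

lemma tsum_bbterm {t : ℝ} (h0 : 0 ≤ t) (h1 : t ≤ 1) :
    ∑' m, (if bb t m then (2⁻¹:ℝ)^(m+1) else 0) = t := by
  have hs := (summable_bbterm t).hasSum
  have htend := hs.tendsto_sum_nat
  have htend2 : Filter.Tendsto (fun m => gs t m) Filter.atTop (nhds t) := by
    have hb : Filter.Tendsto (fun m : ℕ => (2⁻¹:ℝ)^m) Filter.atTop (nhds 0) :=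
      tendsto_pow_atTop_nhds_zero_of_lt_one (by norm_num) (by norm_num)
    have h1' : Filter.Tendsto (fun m => t - (2⁻¹:ℝ)^m) Filter.atTop (nhds (t - 0)) :=
      tendsto_const_nhds.sub hb
    rw [sub_zero] at h1'
    refine tendsto_of_tendsto_of_tendsto_of_le_of_le h1' tendsto_const_nhds
      (fun m => by linarith [(gs_invariant h0 h1 m).2]) (fun m => (gs_invariant h0 h1 m).1)
  have : Filter.Tendsto (fun m => gs t m) Filter.atTop (nhds (∑' m, (if bb t m then (2⁻¹:ℝ)^(m+1) else 0))) := by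
    refine htend.congr (fun m => (gs_eq_sum t m).symm)
  exact tendsto_nhds_unique this htend2

/-- The slice at depth `m` of the lexicographic lower set of the bits of `t`. -/
def Cslice (t : ℝ) (m : ℕ) : Set Cantor :=
  {ω | (∀ i, i < m → ω i = bb t i) ∧ ω m = false ∧ bb t m = true}

/-- Lexicographic lower set: `{ω <lex bits(t)}`, of measure `t`. -/
def Bset (t : ℝ) : Set Cantor := ⋃ m, Cslice t m

lemma measurableSet_cylF {n : ℕ} (x : Fin n → Bool) : MeasurableSet (cylF x) := by
  have : cylF x = ⋂ i : Fin n, {ω : Cantor | ω i = x i} := by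
    ext ω; simp [cylF, Set.mem_iInter]
  rw [this]
  refine MeasurableSet.iInter fun i => ?_
  have h2 : {ω : Cantor | ω (i:ℕ) = x i} = (fun ω : Cantor => ω (i:ℕ)) ⁻¹' {x i} := rfl
  rw [h2]
  exact (measurable_pi_apply (i:ℕ)) (measurableSet_singleton (x i))

lemma Cslice_eq_cylF {t : ℝ} {m : ℕ} (h : bb t m = true) :
    Cslice t m = cylF (fun i : Fin (m+1) => if (i:ℕ) < m then bb t (i:ℕ) else false) := by
  ext ω
  constructor
  · rintro ⟨h1, h2, -⟩
    intro i
    by_cases hi : (i:ℕ) < m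
    · simp [hi, h1 _ hi]
    · have : (i:ℕ) = m := Nat.le_antisymm (Nat.lt_succ_iff.mp i.isLt) (Nat.le_of_not_lt hi)
      simp [hi, this, h2]
  · intro hω
    refine ⟨fun i hi => ?_, ?_, h⟩
    · have := hω ⟨i, Nat.lt_succ_of_lt hi⟩
      simpa [hi] using this
    · have := hω ⟨m, Nat.lt_succ_self m⟩
      simpa using this

lemma measurableSet_Cslice (t : ℝ) (m : ℕ) : MeasurableSet (Cslice t m) := by
  by_cases h : bb t m = true
  · rw [Cslice_eq_cylF h]; exact measurableSet_cylF _
  · have : Cslice t m = ∅ := by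
      ext ω; simp [Cslice, h]
    rw [this]; exact MeasurableSet.empty

lemma measurableSet_Bset (t : ℝ) : MeasurableSet (Bset t) :=
  MeasurableSet.iUnion (measurableSet_Cslice t)

lemma Cslice_disjoint (t : ℝ) : Pairwise (Function.onFun Disjoint (Cslice t)) := by
  have key : ∀ m m', m < m' → Disjoint (Cslice t m) (Cslice t m') := by
    intro m m' hlt
    refine Set.disjoint_left.mpr ?_
    rintro ω ⟨h1, h2, h3⟩ ⟨h1', h2', h3'⟩
    have := h1' m hlt
    rw [h2] at this
    rw [← this] at h3
    simp at h3
  intro m m' hne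
  rcases Nat.lt_or_ge m m' with h | h
  · exact key m m' h
  · exact (key m' m (by omega)).symm

lemma measure_Cslice {ν : Measure Cantor} (hν : IsCoinMeasure ν) (t : ℝ) (m : ℕ) :
    ν (Cslice t m) = ENNReal.ofReal (if bb t m then (2⁻¹:ℝ)^(m+1) else 0) := by
  by_cases h : bb t m = true
  · rw [Cslice_eq_cylF h, hν.2 (m+1)]
    simp only [h, if_true]
    rw [show ((1:ENNReal)/2) = ENNReal.ofReal (2⁻¹:ℝ) by
      rw [ENNReal.ofReal_inv_of_pos (by norm_num)]; norm_num]
    rw [← ENNReal.ofReal_pow (by norm_num)]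
  · have : Cslice t m = ∅ := by ext ω; simp [Cslice, h]
    simp [this, h]

lemma measure_Bset {ν : Measure Cantor} (hν : IsCoinMeasure ν) {t : ℝ}
    (h0 : 0 ≤ t) (h1 : t ≤ 1) : ν (Bset t) = ENNReal.ofReal t := by
  rw [Bset, measure_iUnion (Cslice_disjoint t) (measurableSet_Cslice t)]
  have : ∀ m, ν (Cslice t m) = ENNReal.ofReal (if bb t m then (2⁻¹:ℝ)^(m+1) else 0) :=
    measure_Cslice hν t
  simp_rw [this]
  rw [← ENNReal.ofReal_tsum_of_nonneg (fun m => by split <;> positivity) (summable_bbterm t)]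
  rw [tsum_bbterm h0 h1]

lemma bb_mono {s t : ℝ} (hst : s ≤ t) {m : ℕ} (hpre : ∀ i, i < m → bb s i = bb t i)
    (hm : bb s m = true) : bb t m = true := by
  have hgs : gs s m = gs t m := by
    rw [gs_eq_sum, gs_eq_sum]
    exact Finset.sum_congr rfl fun i hi => by rw [hpre i (Finset.mem_range.mp hi)]
  rw [bb_true_iff] at hm ⊢
  rw [← hgs]; linarith

lemma Bset_mono {s t : ℝ} (hst : s ≤ t) : Bset s ⊆ Bset t := by
  intro ω hω
  obtain ⟨m, hm⟩ := Set.mem_iUnion.mp hω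
  obtain ⟨h1, h2, h3⟩ := hm
  by_cases hagree : ∀ i, i < m → bb s i = bb t i
  · exact Set.mem_iUnion.mpr ⟨m, fun i hi => (h1 i hi).trans (hagree i hi),
      h2, bb_mono hst hagree h3⟩
  · push_neg at hagree
    obtain ⟨i0, hi0, hne⟩ := hagree
    have hex : ∃ i, bb s i ≠ bb t i := ⟨i0, hne⟩
    classical
    let d := Nat.find hex
    have hd : bb s d ≠ bb t d := Nat.find_spec hex
    have hdmin : ∀ j, j < d → bb s j = bb t j := fun j hj => by
      by_contra hc; exact absurd (Nat.find_le hc : d ≤ j) (by omega)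
    have hdm : d < m := lt_of_le_of_lt (Nat.find_le hne : d ≤ i0) hi0
    have hsd : bb s d = false := by
      by_contra hc
      simp only [Bool.not_eq_false] at hc
      exact hd (hc.trans (bb_mono hst hdmin hc).symm)
    have htd : bb t d = true := by
      rcases Bool.eq_false_or_eq_true (bb t d) with h | h
      · exact h
      · exact absurd (hsd.trans h.symm) hd
    exact Set.mem_iUnion.mpr ⟨d, fun i hi => (h1 i (lt_trans hi hdm)).trans (hdmin i hi),
      (h1 d hdm).trans hsd, htd⟩


lemma gs_zero_eval : ∀ m, gs 0 m = 0 := by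
  intro m
  induction m with
  | zero => simp [gs]
  | succ m ih =>
    have hb : bb 0 m = false := by
      rw [Bool.eq_false_iff]
      intro hc
      have := bb_true_iff.mp hc
      rw [ih] at this
      nlinarith [pow_pos (by norm_num : (0:ℝ) < 2⁻¹) (m+1)]
    rw [gs_succ, ih, hb]
    simp

lemma bb_zero_eval (m : ℕ) : bb 0 m = false := by
  rw [Bool.eq_false_iff]
  intro hc
  have := bb_true_iff.mp hc
  rw [gs_zero_eval] at this
  nlinarith [pow_pos (by norm_num : (0:ℝ) < 2⁻¹) (m+1)]

lemma Bset_zero : Bset 0 = ∅ := by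
  ext ω
  simp only [Bset, Set.mem_iUnion, Set.mem_empty_iff_false, iff_false, not_exists]
  rintro m ⟨-, -, h3⟩
  rw [bb_zero_eval] at h3
  exact Bool.false_ne_true h3

/-- The representing measure built from a partition `A` and the matrix `S`. -/
def muS {n : ℕ} (ν : Measure Cantor) (A : Fin n → Set Cantor)
    (S : Matrix (Fin n) (Fin n) ℝ) : Measure (Cantor × Cantor) :=
  ∑ p : Fin n × Fin n, (((n : ℝ≥0)) ^ 2 * Real.toNNReal (S p.1 p.2)) •
      ((ν.restrict (A p.1)).prod (ν.restrict (A p.2)))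

lemma integrable_bdd {α : Type} [MeasurableSpace α] {m : Measure α} [IsFiniteMeasure m]
    {g : α → ℝ} (hg : Measurable g) (hb : ∀ x, |g x| ≤ 1) : Integrable g m :=
  (integrable_const (1:ℝ)).mono' hg.aestronglyMeasurable
    (Filter.Eventually.of_forall (fun x => by simpa using hb x))

lemma integral_muS {n : ℕ} (ν : Measure Cantor) [IsFiniteMeasure ν]
    (A : Fin n → Set Cantor) (hA : ∀ i, MeasurableSet (A i))
    (S : Matrix (Fin n) (Fin n) ℝ) (hnn : ∀ i j, 0 ≤ S i j)
    (g₁ g₂ : Cantor → ℝ) (hm1 : Measurable g₁) (hm2 : Measurable g₂)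
    (hb1 : ∀ x, |g₁ x| ≤ 1) (hb2 : ∀ x, |g₂ x| ≤ 1) :
    ∫ p, g₁ p.1 * g₂ p.2 ∂(muS ν A S) =
      ∑ i, ∑ j, (n:ℝ)^2 * S i j * ((∫ x in A i, g₁ x ∂ν) * (∫ x in A j, g₂ x ∂ν)) := by
  have hmeas : Measurable (fun p : Cantor × Cantor => g₁ p.1 * g₂ p.2) :=
    (hm1.comp measurable_fst).mul (hm2.comp measurable_snd)
  have hbdd : ∀ p : Cantor × Cantor, |g₁ p.1 * g₂ p.2| ≤ 1 := by
    intro p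
    rw [abs_mul]
    calc |g₁ p.1| * |g₂ p.2| ≤ 1 * 1 :=
          mul_le_mul (hb1 _) (hb2 _) (abs_nonneg _) zero_le_one
      _ = 1 := one_mul 1
  have hint : ∀ p : Fin n × Fin n, p ∈ Finset.univ →
      Integrable (fun q : Cantor × Cantor => g₁ q.1 * g₂ q.2)
        ((((n : ℝ≥0)) ^ 2 * Real.toNNReal (S p.1 p.2)) •
          ((ν.restrict (A p.1)).prod (ν.restrict (A p.2)))) := by
    intro p _
    exact integrable_bdd hmeas hbdd
  rw [muS, integral_finset_sum_measure hint]
  rw [Fintype.sum_prod_type]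
  refine Finset.sum_congr rfl fun i _ => Finset.sum_congr rfl fun j _ => ?_
  rw [integral_smul_nnreal_measure, integral_prod_mul]
  have hc : ((((n : ℝ≥0)) ^ 2 * Real.toNNReal (S i j) : ℝ≥0) : ℝ) = (n:ℝ)^2 * S i j := by
    push_cast
    rw [Real.coe_toNNReal _ (hnn i j)]
  rw [NNReal.smul_def, smul_eq_mul, hc]

lemma shape_eq {n k : ℕ} (hn : 0 < n) (hk : 0 < k) (ν : Measure Cantor)
    [IsProbabilityMeasure ν]
    (A : Fin n → Set Cantor) (hA : ∀ i, MeasurableSet (A i))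
    (hdisj : ∀ i j, i ≠ j → Disjoint (A i) (A j))
    (hcov : ∀ x, ∃ i, x ∈ A i)
    (hAm : ∀ i, ν (A i) = ENNReal.ofReal (1/(n:ℝ)))
    (S : Matrix (Fin n) (Fin n) ℝ) (hnn : ∀ i j, 0 ≤ S i j) :
    mShape0 ν (muS ν A S) k = matShape S k := by
  have hnR : (0:ℝ) < n := by exact_mod_cast hn
  have hmem : ∀ (x : Cantor) (i j : Fin n), i ≠ j → x ∈ A i → x ∉ A j := by
    intro x i j hij hxi hxj
    exact Set.disjoint_left.mp (hdisj i j hij) hxi hxj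
  have hAtoReal : ∀ i, (ν (A i)).toReal = 1/(n:ℝ) := by
    intro i
    rw [hAm i, ENNReal.toReal_ofReal (by positivity)]
  have hone : ∀ x : Cantor, ∑ i, (A i).indicator (fun _ => (1:ℝ)) x = 1 := by
    intro x
    obtain ⟨i0, hi0⟩ := hcov x
    rw [Finset.sum_eq_single i0]
    · simp [Set.indicator_of_mem hi0]
    · intro j _ hj
      exact Set.indicator_of_notMem (hmem x i0 j (Ne.symm hj) hi0) _
    · simp
  ext M
  constructor
  · rintro ⟨f, hfm, hfnn, hfsum, hfint, hfM⟩
    have hfb : ∀ a x, |f a x| ≤ 1 := by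
      intro a x
      rw [abs_of_nonneg (hfnn a x), ← hfsum x]
      exact Finset.single_le_sum (f := fun i => f i x) (fun i _ => hfnn i x)
        (Finset.mem_univ a)
    have hfI : ∀ a, Integrable (f a) ν := fun a => integrable_bdd (hfm a) (hfb a)
    set M' : Matrix (Fin k) (Fin n) ℝ := fun a i => n * ∫ x in A i, f a x ∂ν with hM'
    have hsplit : ∀ (g : Cantor → ℝ), Measurable g → Integrable g ν →
        ∑ i, ∫ x in A i, g x ∂ν = ∫ x, g x ∂ν := by
      intro g hgm hgI
      have h1 : ∀ i, ∫ x in A i, g x ∂ν = ∫ x, (A i).indicator g x ∂ν := by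
        intro i; rw [integral_indicator (hA i)]
      simp_rw [h1]
      rw [← integral_finset_sum _ (fun i _ => hgI.indicator (hA i))]
      refine integral_congr_ae (Filter.Eventually.of_forall fun x => ?_)
      obtain ⟨i0, hi0⟩ := hcov x
      show (∑ i, (A i).indicator g x) = g x
      rw [Finset.sum_eq_single i0]
      · exact Set.indicator_of_mem hi0 g
      · intro j _ hj
        exact Set.indicator_of_notMem (hmem x i0 j (Ne.symm hj) hi0) _
      · simp
    have hKset : M' ∈ Kset k (Fin n) := by
      refine ⟨fun a i => ?_, fun a => ?_, fun i => ?_⟩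
      · exact mul_nonneg (by positivity)
          (integral_nonneg (fun x => hfnn a x))
      · rw [← Finset.mul_sum, hsplit (f a) (hfm a) (hfI a), hfint a]
        simp [Fintype.card_fin]
        field_simp
      · have : ∀ a, ∫ x in A i, f a x ∂ν =
            ∫ x, f a x ∂(ν.restrict (A i)) := fun a => rfl
        rw [show (∑ a, M' a i) = (n:ℝ) * ∑ a, ∫ x in A i, f a x ∂ν by
          rw [Finset.mul_sum]]
        rw [← integral_finset_sum _ (fun a _ =>
          (integrable_bdd (hfm a) (hfb a) : Integrable (f a) (ν.restrict (A i))))]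
        have h1 : ∫ x in A i, (∑ a, f a x) ∂ν = ∫ x in A i, (1:ℝ) ∂ν := by
          refine integral_congr_ae (Filter.Eventually.of_forall fun x => hfsum x)
        rw [h1, setIntegral_const, measureReal_def, hAtoReal i, smul_eq_mul, mul_one]
        field_simp
    refine ⟨M', hKset, ?_⟩
    ext a b
    rw [hfM a b, integral_muS ν A hA S hnn (f a) (f b) (hfm a) (hfm b) (hfb a) (hfb b)]
    change (M' * S * M'ᵀ) a b = _
    rw [Matrix.mul_apply]
    simp_rw [Matrix.mul_apply, Matrix.transpose_apply, Finset.sum_mul]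
    rw [Finset.sum_comm]
    refine Finset.sum_congr rfl fun i _ => Finset.sum_congr rfl fun j _ => ?_
    show ((n:ℝ) * ∫ x in A i, f a x ∂ν) * S i j * ((n:ℝ) * ∫ x in A j, f b x ∂ν) = _
    ring
  · rintro ⟨M', hM', rfl⟩
    obtain ⟨hnnM, hrow, hcol⟩ := hM'
    have hMle1 : ∀ a i, M' a i ≤ 1 := by
      intro a i
      rw [← hcol i]
      exact Finset.single_le_sum (f := fun a => M' a i) (fun a _ => hnnM a i)
        (Finset.mem_univ a)
    set f : Fin k → Cantor → ℝ :=
      fun a x => ∑ i, (A i).indicator (fun _ => M' a i) x with hf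
    have hfm : ∀ a, Measurable (f a) :=
      fun a => Finset.measurable_sum _ fun i _ => measurable_const.indicator (hA i)
    have hfnn : ∀ a x, 0 ≤ f a x := fun a x =>
      Finset.sum_nonneg fun i _ => Set.indicator_nonneg (fun _ _ => hnnM a i) x
    have hfval : ∀ a i x, x ∈ A i → f a x = M' a i := by
      intro a i x hx
      show (∑ j, (A j).indicator (fun _ => M' a j) x) = M' a i
      rw [Finset.sum_eq_single i]
      · exact Set.indicator_of_mem hx _
      · intro j _ hj
        exact Set.indicator_of_notMem (hmem x i j (Ne.symm hj) hx) _
      · simp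
    have hfsum : ∀ x, ∑ a, f a x = 1 := by
      intro x
      obtain ⟨i0, hi0⟩ := hcov x
      have : ∀ a, f a x = M' a i0 := fun a => hfval a i0 x hi0
      simp_rw [this]
      exact hcol i0
    have hfb : ∀ a x, |f a x| ≤ 1 := by
      intro a x
      rw [abs_of_nonneg (hfnn a x), ← hfsum x]
      exact Finset.single_le_sum (f := fun i => f i x) (fun i _ => hfnn i x)
        (Finset.mem_univ a)
    have hsetint : ∀ a i, ∫ x in A i, f a x ∂ν = M' a i / n := by
      intro a i
      rw [setIntegral_congr_fun (hA i) (g := fun _ => M' a i)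
        (fun x hx => hfval a i x hx)]
      rw [setIntegral_const, measureReal_def, hAtoReal i, smul_eq_mul]
      ring
    refine ⟨f, hfm, hfnn, hfsum, ?_, ?_⟩
    · intro a
      rw [hf]
      rw [integral_finset_sum _ (fun i _ => (integrable_const (M' a i)).indicator (hA i))]
      have : ∀ i, ∫ x, (A i).indicator (fun _ => M' a i) x ∂ν = M' a i / n := by
        intro i
        rw [integral_indicator_const _ (hA i), measureReal_def, hAtoReal i, smul_eq_mul]
        ring
      simp_rw [this]
      rw [← Finset.sum_div, hrow a]
      rw [Fintype.card_fin]
      field_simp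
    · intro a b
      rw [integral_muS ν A hA S hnn (f a) (f b) (hfm a) (hfm b) (hfb a) (hfb b)]
      change (M' * S * M'ᵀ) a b = _
      rw [Matrix.mul_apply]
      simp_rw [Matrix.mul_apply, Matrix.transpose_apply, Finset.sum_mul]
      rw [Finset.sum_comm]
      refine Finset.sum_congr rfl fun i _ => Finset.sum_congr rfl fun j _ => ?_
      rw [hsetint a i, hsetint b j]
      have hne : (n:ℝ) ≠ 0 := ne_of_gt hnR
      field_simp

lemma cont_entry {k n : ℕ} (a : Fin k) (i : Fin n) :
    Continuous fun M : Matrix (Fin k) (Fin n) ℝ => M a i :=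
  (continuous_apply i).comp (continuous_apply a)

lemma isCompact_Kset {k n : ℕ} : IsCompact (Kset k (Fin n)) := by
  have hsub : Kset k (Fin n) ⊆ Set.pi Set.univ fun _ : Fin k =>
      Set.pi Set.univ fun _ : Fin n => Set.Icc (0:ℝ) 1 := by
    rintro M ⟨hpos, hrow, hcol⟩ a _ i _
    refine ⟨hpos a i, ?_⟩
    rw [← hcol i]
    exact Finset.single_le_sum (f := fun a => M a i) (fun a' _ => hpos a' i)
      (Finset.mem_univ a)
  have hcompact : IsCompact (Set.pi Set.univ fun _ : Fin k =>
      Set.pi Set.univ fun _ : Fin n => Set.Icc (0:ℝ) 1) :=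
    isCompact_univ_pi fun _ => isCompact_univ_pi fun _ => isCompact_Icc
  refine hcompact.of_isClosed_subset ?_ hsub
  have h1 : Kset k (Fin n) =
      (⋂ a : Fin k, ⋂ i : Fin n, {M : Matrix (Fin k) (Fin n) ℝ | 0 ≤ M a i}) ∩
      ((⋂ a : Fin k, {M : Matrix (Fin k) (Fin n) ℝ |
          ∑ i, M a i = (Fintype.card (Fin n) : ℝ) / k}) ∩
       (⋂ i : Fin n, {M : Matrix (Fin k) (Fin n) ℝ | ∑ a, M a i = 1})) := by
    ext M
    simp only [Kset, Set.mem_setOf_eq, Set.mem_inter_iff, Set.mem_iInter]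
  rw [h1]
  refine IsClosed.inter ?_ (IsClosed.inter ?_ ?_)
  · exact isClosed_iInter fun a => isClosed_iInter fun i =>
      isClosed_le continuous_const (cont_entry a i)
  · exact isClosed_iInter fun a =>
      isClosed_eq (continuous_finset_sum _ fun i _ => cont_entry a i) continuous_const
  · exact isClosed_iInter fun i =>
      isClosed_eq (continuous_finset_sum _ fun a _ => cont_entry a i) continuous_const

lemma isClosed_matShape {n k : ℕ} (S : Matrix (Fin n) (Fin n) ℝ) :
    IsClosed (matShape S k) := by
  have hcont : Continuous fun M : Matrix (Fin k) (Fin n) ℝ => M * S * Mᵀ := by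
    have h1 : Continuous fun M : Matrix (Fin k) (Fin n) ℝ => M * S :=
      (continuous_id.matrix_mul continuous_const)
    exact h1.matrix_mul continuous_id.matrix_transpose
  exact ((isCompact_Kset).image hcont).isClosed

/-- Every nonnegative `n × n` matrix `S` is represented by a Borel measure `μ`
on `𝒞 × 𝒞` with `C(μ,k) = C(S,k)` for every `k`. -/
theorem stmt_8 (ν : Measure Cantor) (hν : IsCoinMeasure ν) (n : ℕ)
    (S : Matrix (Fin n) (Fin n) ℝ) (hnn : ∀ i j, 0 ≤ S i j) :
    ∃ μ : Measure (Cantor × Cantor), ∀ k : ℕ, 0 < k → mShape ν μ k = matShape S k := by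
  haveI : IsProbabilityMeasure ν := hν.1
  rcases Nat.eq_zero_or_pos n with hn0 | hn
  · subst hn0
    refine ⟨0, fun k hk => ?_⟩
    have hkR : (0:ℝ) < k := by exact_mod_cast hk
    have h0 : mShape0 ν 0 k = matShape S k := by
      ext M
      constructor
      · rintro ⟨f, -, -, -, -, hfM⟩
        have hM0 : M = 0 := by
          ext a b
          rw [hfM a b]
          simp
        refine ⟨0, ⟨fun i j => le_refl _, fun a => by simp, fun j => j.elim0⟩, ?_⟩
        rw [hM0]
        ext a b
        simp [Matrix.mul_apply]
      · rintro ⟨M', -, rfl⟩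
        refine ⟨fun _ _ => 1/(k:ℝ), fun i => measurable_const, fun i x => by positivity,
          fun x => ?_, fun i => ?_, fun a b => ?_⟩
        · rw [Finset.sum_const]
          simp only [Finset.card_univ, Fintype.card_fin, nsmul_eq_mul]
          field_simp
        · rw [integral_const]
          simp [measure_univ]
        · show (M' * S * M'ᵀ) a b = _
          simp [Matrix.mul_apply]
    show closure (mShape0 ν 0 k) = matShape S k
    rw [h0, (isClosed_matShape S).closure_eq]
  · classical
    have hnR : (0:ℝ) < n := by exact_mod_cast hn
    set A : Fin n → Set Cantor := fun i =>
      (if (i:ℕ)+1 = n then Set.univ else Bset (((i:ℕ)+1 : ℝ)/n)) \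
        Bset (((i:ℕ) : ℝ)/n) with hAdef
    have hbr : ∀ i : Fin n, MeasurableSet
        (if (i:ℕ)+1 = n then Set.univ else Bset (((i:ℕ)+1 : ℝ)/n)) := by
      intro i
      split
      · exact MeasurableSet.univ
      · exact measurableSet_Bset _
    have hA : ∀ i, MeasurableSet (A i) := fun i =>
      (hbr i).diff (measurableSet_Bset _)
    have hBsub : ∀ i : Fin n, Bset (((i:ℕ):ℝ)/n) ⊆
        (if (i:ℕ)+1 = n then Set.univ else Bset (((i:ℕ)+1:ℝ)/n)) := by
      intro i
      split
      · exact Set.subset_univ _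
      · exact Bset_mono ((div_le_div_iff_of_pos_right hnR).mpr (by linarith))
    have hbrm : ∀ i : Fin n,
        ν (if (i:ℕ)+1 = n then Set.univ else Bset (((i:ℕ)+1:ℝ)/n)) =
          ENNReal.ofReal (((i:ℕ)+1:ℝ)/n) := by
      intro i
      split
      case isTrue h =>
        rw [measure_univ]
        have h2 : (((i:ℕ):ℝ)+1)/n = 1 := by
          have : ((i:ℕ):ℝ) + 1 = (n:ℝ) := by exact_mod_cast congrArg (Nat.cast : ℕ → ℝ) h
          rw [this]
          field_simp
        rw [h2, ENNReal.ofReal_one]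
      case isFalse h =>
        refine measure_Bset hν (by positivity) ?_
        rw [div_le_one hnR]
        have : (i:ℕ) + 1 ≤ n := i.isLt
        exact_mod_cast this
    have hAm : ∀ i, ν (A i) = ENNReal.ofReal (1/(n:ℝ)) := by
      intro i
      rw [hAdef]
      rw [measure_diff (hBsub i) (measurableSet_Bset _).nullMeasurableSet
        (measure_ne_top ν _)]
      rw [hbrm i, measure_Bset hν (by positivity) ?hle]
      case hle =>
        rw [div_le_one hnR]
        have : (i:ℕ) ≤ n := le_of_lt i.isLt
        exact_mod_cast this
      rw [← ENNReal.ofReal_sub _ (by positivity)]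
      congr 1
      field_simp
      ring
    have hdisj : ∀ i j : Fin n, i ≠ j → Disjoint (A i) (A j) := by
      have key : ∀ i j : Fin n, (i:ℕ) < (j:ℕ) → Disjoint (A i) (A j) := by
        intro i j hij
        refine Set.disjoint_left.mpr ?_
        rintro x ⟨hx1, -⟩ ⟨-, hx2⟩
        have hne : ¬ ((i:ℕ)+1 = n) := by
          have := j.isLt
          omega
        rw [if_neg hne] at hx1
        refine hx2 (Bset_mono ?_ hx1)
        rw [div_le_div_iff₀ hnR hnR]
        have : ((i:ℕ):ℝ) + 1 ≤ ((j:ℕ):ℝ) := by exact_mod_cast hij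
        nlinarith
      intro i j hij
      rcases Nat.lt_or_ge (i:ℕ) (j:ℕ) with h | h
      · exact key i j h
      · have h2 : (j:ℕ) < (i:ℕ) :=
          lt_of_le_of_ne h (fun hc => hij (Fin.ext hc.symm))
        exact (key j i h2).symm
    have hcov : ∀ x, ∃ i, x ∈ A i := by
      intro x
      have hP0 : x ∉ Bset (((0:ℕ):ℝ)/n) := by
        have : (((0:ℕ):ℝ)/n) = 0 := by simp
        rw [this, Bset_zero]
        exact Set.notMem_empty x
      set P : ℕ → Prop := fun i => x ∉ Bset ((i:ℝ)/n) with hPdef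
      have hP0' : P 0 := hP0
      set i0 := Nat.findGreatest P (n-1) with hi0def
      have hi0le : i0 ≤ n-1 := Nat.findGreatest_le _
      have hi0P : P i0 := Nat.findGreatest_spec (Nat.zero_le _) hP0'
      have hi0lt : i0 < n := by omega
      refine ⟨⟨i0, hi0lt⟩, ?_, hi0P⟩
      show x ∈ (if i0+1 = n then Set.univ else Bset (((i0:ℝ)+1)/n))
      split
      case isTrue h => trivial
      case isFalse h =>
        have h2 : ¬ P (i0+1) :=
          Nat.findGreatest_is_greatest (n := n-1) (by omega) (by omega)
        have h3 : x ∈ Bset (((i0+1:ℕ):ℝ)/n) := by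
          by_contra hc
          exact h2 hc
        have h4 : ((i0+1:ℕ):ℝ) = (i0:ℝ)+1 := by push_cast; ring
        rwa [h4] at h3
    refine ⟨muS ν A S, fun k hk => ?_⟩
    show closure (mShape0 ν (muS ν A S) k) = matShape S k
    rw [shape_eq hn hk ν A hA hdisj hcov hAm S hnn, (isClosed_matShape S).closure_eq]
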